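/- arXiv:0810.4438 — 7 statements merged into one kernel-verified Lean document; each statement's English description precedes it below -/
import Mathlib

section
/- Let 0 < h < 1 be a constant, and let δ > 2h, M > 0, β > 0, ε ∈ (0,1). Then there exists a positive finite constant c, depending only on δ, ε, β, M, such that for all 0 < a ≤ M: ∫_ε^1 ∫_ε^1 (a + |s - r|^{2h})^{-β} ds dr ≤ c(a^{-(β - 1/δ)} + 1). -/
open MeasureTheory intervalIntegral

lemma abs_rpow_II {γ : ℝ} (hγ : -1 < γ) (a b : ℝ) :
    IntervalIntegrable (fun u : ℝ => |u| ^ γ) volume a b := by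
  have key : ∀ c : ℝ, 0 ≤ c → IntervalIntegrable (fun u : ℝ => |u| ^ γ) volume 0 c := by
    intro c hc
    have h0 := intervalIntegrable_rpow' (a := 0) (b := c) hγ
    rw [intervalIntegrable_iff, Set.uIoc_of_le hc] at h0 ⊢
    exact h0.congr_fun (fun x hx => by rw [abs_of_pos hx.1]) measurableSet_Ioc
  have all : ∀ c : ℝ, IntervalIntegrable (fun u : ℝ => |u| ^ γ) volume 0 c := by
    intro c
    rcases le_total 0 c with hc | hc
    · exact key c hc
    · rw [IntervalIntegrable.iff_comp_neg]
      simp only [abs_neg, neg_zero]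
      exact key (-c) (by linarith)
  exact (all a).symm.trans (all b)

theorem stmt_5 (h δ M β ε : ℝ) (hh0 : 0 < h) (hh1 : h < 1) (hδ : 2 * h < δ)
    (hM : 0 < M) (hβ : 0 < β) (hε0 : 0 < ε) (hε1 : ε < 1) :
    ∃ c : ℝ, 0 < c ∧ ∀ a : ℝ, 0 < a → a ≤ M →
      (∫ r in ε..1, ∫ s in ε..1, (a + |s - r| ^ (2 * h)) ^ (-β)) ≤
        c * (a ^ (-(β - 1 / δ)) + 1) := by
  have hδ0 : 0 < δ := lt_trans (by linarith) hδ
  set θ : ℝ := min β (1 / δ) with hθdef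
  have hθpos : 0 < θ := lt_min hβ (by positivity)
  have hθβ : θ ≤ β := min_le_left _ _
  set γ : ℝ := 2 * h * θ with hγdef
  have hγpos : 0 < γ := by positivity
  have hγ1 : γ < 1 := by
    have h1 : θ ≤ 1 / δ := min_le_right _ _
    have h2 : 2 * h * θ ≤ 2 * h * (1 / δ) := by nlinarith
    have h3 : 2 * h * (1 / δ) < 1 := by
      rw [mul_one_div, div_lt_one hδ0]; exact hδ
    linarith
  have hγneg : -1 < -γ := by linarith
  set K : ℝ := ∫ u in (-1 : ℝ)..1, |u| ^ (-γ) with hK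
  have hK0 : 0 ≤ K :=
    intervalIntegral.integral_nonneg (by norm_num)
      (fun u _ => Real.rpow_nonneg (abs_nonneg u) _)
  refine ⟨(1 - ε) * K + 1, by nlinarith [mul_nonneg (by linarith : (0:ℝ) ≤ 1 - ε) hK0], ?_⟩
  intro a ha haM
  have haQ : 0 ≤ a ^ (-(β - 1 / δ)) := Real.rpow_nonneg ha.le _
  have haP : 0 ≤ a ^ (-(β - θ)) := Real.rpow_nonneg ha.le _
  have hle : a ^ (-(β - θ)) ≤ a ^ (-(β - 1 / δ)) + 1 := by
    rcases le_total β (1 / δ) with hc | hc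
    · have : θ = β := min_eq_left hc
      rw [this, sub_self, neg_zero, Real.rpow_zero]
      linarith
    · have : θ = 1 / δ := min_eq_right hc
      rw [this]
      linarith
  have hinner : ∀ r ∈ Set.Icc ε (1 : ℝ),
      (∫ s in ε..1, (a + |s - r| ^ (2 * h)) ^ (-β)) ≤ a ^ (-(β - θ)) * K := by
    intro r hr
    have hbase : ∀ s : ℝ, 0 < a + |s - r| ^ (2 * h) := fun s => by positivity
    have hcf : Continuous fun s : ℝ => (a + |s - r| ^ (2 * h)) ^ (-β) := by
      apply Continuous.rpow_const
      · exact continuous_const.add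
          ((continuous_abs.comp (continuous_id.sub continuous_const)).rpow_const
            (fun x => Or.inr (by linarith)))
      · exact fun s => Or.inl (hbase s).ne'
    have hIg : IntervalIntegrable (fun s : ℝ => a ^ (-(β - θ)) * |s - r| ^ (-γ)) volume ε 1 := by
      have h1 := (abs_rpow_II hγneg (ε - r) (1 - r)).comp_sub_right r
      simp only [sub_add_cancel] at h1
      exact h1.const_mul _
    have hptwise : (fun s : ℝ => (a + |s - r| ^ (2 * h)) ^ (-β)) ≤ᵐ[volume]
        fun s => a ^ (-(β - θ)) * |s - r| ^ (-γ) := by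
      filter_upwards [compl_mem_ae_iff.2 (measure_singleton r)] with s hs
      have hsr : s ≠ r := by simpa using hs
      have hx : 0 < |s - r| := abs_pos.2 (sub_ne_zero.2 hsr)
      have hX : 0 < |s - r| ^ (2 * h) := Real.rpow_pos_of_pos hx _
      have h1 : (a + |s - r| ^ (2 * h)) ^ (-β)
          = (a + |s - r| ^ (2 * h)) ^ (-(β - θ)) * (a + |s - r| ^ (2 * h)) ^ (-θ) := by
        rw [← Real.rpow_add (hbase s)]; ring_nf
      have h2 : (a + |s - r| ^ (2 * h)) ^ (-(β - θ)) ≤ a ^ (-(β - θ)) :=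
        Real.rpow_le_rpow_of_nonpos ha (le_add_of_nonneg_right hX.le) (by linarith)
      have h3 : (a + |s - r| ^ (2 * h)) ^ (-θ) ≤ |s - r| ^ (-γ) := by
        have h4 := Real.rpow_le_rpow_of_nonpos hX (le_add_of_nonneg_left ha.le)
          (by linarith : -θ ≤ 0)
        rw [← Real.rpow_mul (abs_nonneg _), mul_neg, ← hγdef] at h4
        exact h4
      calc (a + |s - r| ^ (2 * h)) ^ (-β)
          = (a + |s - r| ^ (2 * h)) ^ (-(β - θ)) * (a + |s - r| ^ (2 * h)) ^ (-θ) := h1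
        _ ≤ a ^ (-(β - θ)) * |s - r| ^ (-γ) :=
            mul_le_mul h2 h3 (Real.rpow_nonneg (hbase s).le _) haP
    calc (∫ s in ε..1, (a + |s - r| ^ (2 * h)) ^ (-β))
        ≤ ∫ s in ε..1, a ^ (-(β - θ)) * |s - r| ^ (-γ) :=
          intervalIntegral.integral_mono_ae (by linarith) (hcf.intervalIntegrable _ _) hIg hptwise
      _ = a ^ (-(β - θ)) * ∫ s in ε..1, |s - r| ^ (-γ) := intervalIntegral.integral_const_mul _ _
      _ ≤ a ^ (-(β - θ)) * K := by
          apply mul_le_mul_of_nonneg_left _ haP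
          have heq : (∫ s in ε..1, |s - r| ^ (-γ)) = ∫ u in ε - r..1 - r, |u| ^ (-γ) :=
            intervalIntegral.integral_comp_sub_right (fun u => |u| ^ (-γ)) r
          rw [heq]
          exact intervalIntegral.integral_mono_interval (by linarith [hr.2]) (by linarith)
            (by linarith [hr.1])
            (Filter.Eventually.of_forall fun u => Real.rpow_nonneg (abs_nonneg u) _)
            (abs_rpow_II hγneg _ _)
  by_cases hInt : IntervalIntegrable
      (fun r => ∫ s in ε..1, (a + |s - r| ^ (2 * h)) ^ (-β)) volume ε 1
  · calc (∫ r in ε..1, ∫ s in ε..1, (a + |s - r| ^ (2 * h)) ^ (-β))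
        ≤ ∫ _r in ε..1, a ^ (-(β - θ)) * K :=
          intervalIntegral.integral_mono_on (by linarith) hInt intervalIntegrable_const hinner
      _ = (1 - ε) * (a ^ (-(β - θ)) * K) := by
          rw [intervalIntegral.integral_const, smul_eq_mul]
      _ ≤ ((1 - ε) * K + 1) * (a ^ (-(β - 1 / δ)) + 1) := by
          nlinarith [mul_le_mul_of_nonneg_left hle
            (mul_nonneg (by linarith : (0:ℝ) ≤ 1 - ε) hK0), haQ, hK0]
  · rw [intervalIntegral.integral_undef hInt]
    nlinarith [mul_nonneg (by linarith : (0:ℝ) ≤ 1 - ε) hK0, haQ]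
end

section
/- Let α, β, η > 0 with αβ > 1, and let J(A,B) = ∫_0^1 dt / ((A + t^α)^β (B + t)^η). Then there exist finite constants c₁, c₂ depending only on α, β, η such that for all A, B > 0 with A^{1/α} ≤ c₁ B, J(A,B) ≤ c₂ / (A^{β - 1/α} B^η). -/
open MeasureTheory intervalIntegral

lemma stmt_6_aux (α β : ℝ) (hα : 0 < α) (hβ : 0 < β) (hαβ : 1 < α * β)
    (A : ℝ) (hA : 0 < A) :
    (∫ t in (0:ℝ)..1, 1 / (A + t ^ α) ^ β) ≤ (1 + 1 / (α * β - 1)) * A ^ (1 / α - β) := by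
  have hαβ1 : 0 < α * β - 1 := by linarith
  have hApow : (0:ℝ) < A ^ (1 / α - β) := Real.rpow_pos_of_pos hA _
  -- positivity / continuity facts
  have hpos : ∀ t : ℝ, 0 ≤ t → 0 < A + t ^ α := fun t ht =>
    add_pos_of_pos_of_nonneg hA (Real.rpow_nonneg ht α)
  have hcontOn : ∀ a b : ℝ, 0 ≤ a → 0 ≤ b →
      IntervalIntegrable (fun t : ℝ => 1 / (A + t ^ α) ^ β) volume a b := by
    intro a b ha hb
    have hnn : ∀ t ∈ Set.uIcc a b, (0:ℝ) ≤ t := by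
      intro t ht
      rcases le_total a b with h | h
      · rw [Set.uIcc_of_le h] at ht; exact le_trans ha ht.1
      · rw [Set.uIcc_of_ge h] at ht; exact le_trans hb ht.1
    apply ContinuousOn.intervalIntegrable
    apply ContinuousOn.div continuousOn_const
    · exact (continuousOn_const.add (continuousOn_id.rpow_const
        fun t ht => Or.inr hα.le)).rpow_const
        fun t ht => Or.inl (hpos t (hnn t ht)).ne'
    · intro t ht
      exact (Real.rpow_pos_of_pos (hpos t (hnn t ht)) β).ne'
  -- pointwise constant bound
  have hptA : ∀ t : ℝ, 0 ≤ t → 1 / (A + t ^ α) ^ β ≤ A ^ (-β) := by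
    intro t ht
    rw [Real.rpow_neg hA.le, ← one_div]
    gcongr
    exact le_add_of_nonneg_right (Real.rpow_nonneg ht α)
  rcases le_or_gt 1 A with h1 | h1
  · -- A ≥ 1 : bound by A^(-β)
    have hb : (∫ t in (0:ℝ)..1, 1 / (A + t ^ α) ^ β) ≤ ∫ t in (0:ℝ)..1, A ^ (-β) := by
      apply intervalIntegral.integral_mono_on zero_le_one (hcontOn 0 1 le_rfl zero_le_one)
        intervalIntegrable_const
      intro t ht
      exact hptA t ht.1
    have hc : (∫ t in (0:ℝ)..1, A ^ (-β)) = A ^ (-β) := by simp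
    have hd : A ^ (-β) ≤ A ^ (1 / α - β) := by
      apply Real.rpow_le_rpow_of_exponent_le h1
      have : 0 < 1 / α := by positivity
      linarith
    have he : A ^ (1 / α - β) ≤ (1 + 1 / (α * β - 1)) * A ^ (1 / α - β) := by
      nlinarith [hApow, (by positivity : (0:ℝ) < 1 / (α * β - 1))]
    calc (∫ t in (0:ℝ)..1, 1 / (A + t ^ α) ^ β) ≤ ∫ t in (0:ℝ)..1, A ^ (-β) := hb
      _ = A ^ (-β) := hc
      _ ≤ A ^ (1 / α - β) := hd
      _ ≤ _ := he
  · -- A < 1 : split at s = A^(1/α)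
    set s : ℝ := A ^ (1 / α) with hs
    have hs0 : 0 < s := Real.rpow_pos_of_pos hA _
    have hs1 : s ≤ 1 := Real.rpow_le_one hA.le h1.le (by positivity)
    have hint1 : IntervalIntegrable (fun t : ℝ => 1 / (A + t ^ α) ^ β) volume 0 s :=
      hcontOn 0 s le_rfl hs0.le
    have hint2 : IntervalIntegrable (fun t : ℝ => 1 / (A + t ^ α) ^ β) volume s 1 :=
      hcontOn s 1 hs0.le zero_le_one
    have hsplit : (∫ t in (0:ℝ)..1, 1 / (A + t ^ α) ^ β) =
        (∫ t in (0:ℝ)..s, 1 / (A + t ^ α) ^ β) + ∫ t in s..1, 1 / (A + t ^ α) ^ β :=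
      (intervalIntegral.integral_add_adjacent_intervals hint1 hint2).symm
    -- first piece
    have hp1 : (∫ t in (0:ℝ)..s, 1 / (A + t ^ α) ^ β) ≤ A ^ (1 / α - β) := by
      have hb : (∫ t in (0:ℝ)..s, 1 / (A + t ^ α) ^ β) ≤ ∫ t in (0:ℝ)..s, A ^ (-β) := by
        apply intervalIntegral.integral_mono_on hs0.le hint1 intervalIntegrable_const
        intro t ht
        exact hptA t ht.1
      have hc : (∫ t in (0:ℝ)..s, A ^ (-β)) = s * A ^ (-β) := by simp
      have hd : s * A ^ (-β) = A ^ (1 / α - β) := by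
        rw [hs, ← Real.rpow_add hA, ← sub_eq_add_neg]
      linarith [hb, hc ▸ hb, hd]
    -- second piece
    have hp2 : (∫ t in s..1, 1 / (A + t ^ α) ^ β) ≤ (1 / (α * β - 1)) * A ^ (1 / α - β) := by
      have hnot : (0:ℝ) ∉ Set.uIcc s 1 := by
        rw [Set.uIcc_of_le hs1]
        intro h
        exact absurd h.1 (not_le.mpr hs0)
      have hintr : IntervalIntegrable (fun t : ℝ => t ^ (-(α * β))) volume s 1 :=
        intervalIntegrable_rpow (Or.inr hnot)
      have hb : (∫ t in s..1, 1 / (A + t ^ α) ^ β) ≤ ∫ t in s..1, t ^ (-(α * β)) := by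
        apply intervalIntegral.integral_mono_on hs1 hint2 hintr
        intro t ht
        have ht0 : 0 < t := lt_of_lt_of_le hs0 ht.1
        have heq : t ^ (-(α * β)) = 1 / (t ^ α) ^ β := by
          rw [show -(α * β) = α * (-β) by ring, Real.rpow_mul ht0.le,
            Real.rpow_neg (Real.rpow_nonneg ht0.le α), one_div]
        rw [heq]
        gcongr
        exact le_add_of_nonneg_left hA.le
      have hval : (∫ t in s..1, t ^ (-(α * β))) =
          (1 - s ^ (-(α * β) + 1)) / (-(α * β) + 1) := by
        rw [integral_rpow (Or.inr ⟨by intro h; rw [neg_eq_iff_eq_neg] at h; nlinarith, hnot⟩)]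
        rw [Real.one_rpow]
      have hsv : s ^ (-(α * β) + 1) = A ^ (1 / α - β) := by
        rw [hs, ← Real.rpow_mul hA.le]
        congr 1
        field_simp
        ring
      have hfin : (1 - s ^ (-(α * β) + 1)) / (-(α * β) + 1) ≤
          (1 / (α * β - 1)) * A ^ (1 / α - β) := by
        rw [hsv]
        rw [div_le_iff_of_neg (by linarith : -(α * β) + 1 < 0)]
        have h2 : 0 < A ^ (1 / α - β) := hApow
        field_simp
        ring_nf
        nlinarith
      calc (∫ t in s..1, 1 / (A + t ^ α) ^ β) ≤ ∫ t in s..1, t ^ (-(α * β)) := hb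
        _ = (1 - s ^ (-(α * β) + 1)) / (-(α * β) + 1) := hval
        _ ≤ _ := hfin
    rw [hsplit]
    linarith [hp1, hp2]

theorem stmt_6 (α β η : ℝ) (hα : 0 < α) (hβ : 0 < β) (hη : 0 < η) (hαβ : 1 < α * β) :
    ∃ c₁ c₂ : ℝ, 0 < c₁ ∧ 0 < c₂ ∧ ∀ A B : ℝ, 0 < A → 0 < B → A ^ (1 / α) ≤ c₁ * B →
      (∫ t in (0:ℝ)..1, 1 / ((A + t ^ α) ^ β * (B + t) ^ η)) ≤
        c₂ / (A ^ (β - 1 / α) * B ^ η) := by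
  have hαβ1 : 0 < α * β - 1 := by linarith
  refine ⟨1, 1 + 1 / (α * β - 1), one_pos, by positivity, ?_⟩
  intro A B hA hB _
  have hpos : ∀ t : ℝ, 0 ≤ t → 0 < A + t ^ α := fun t ht =>
    add_pos_of_pos_of_nonneg hA (Real.rpow_nonneg ht α)
  have hnn : ∀ t ∈ Set.uIcc (0:ℝ) 1, (0:ℝ) ≤ t := by
    rw [Set.uIcc_of_le zero_le_one]; exact fun t ht => ht.1
  have hBpos : ∀ t : ℝ, 0 ≤ t → 0 < (B + t) ^ η := fun t ht =>
    Real.rpow_pos_of_pos (by linarith) η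
  -- integrability of the full integrand
  have hint : IntervalIntegrable
      (fun t : ℝ => 1 / ((A + t ^ α) ^ β * (B + t) ^ η)) volume 0 1 := by
    apply ContinuousOn.intervalIntegrable
    apply ContinuousOn.div continuousOn_const
    · apply ContinuousOn.mul
      · exact (continuousOn_const.add (continuousOn_id.rpow_const
          fun t ht => Or.inr hα.le)).rpow_const
          fun t ht => Or.inl (hpos t (hnn t ht)).ne'
      · exact (continuousOn_const.add continuousOn_id).rpow_const
          fun t ht => Or.inl (by have := hnn t ht; exact (show (0:ℝ) < B + t by linarith).ne')
    · intro t ht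
      exact (mul_pos (Real.rpow_pos_of_pos (hpos t (hnn t ht)) β)
        (hBpos t (hnn t ht))).ne'
  have hint2 : IntervalIntegrable
      (fun t : ℝ => B ^ (-η) * (1 / (A + t ^ α) ^ β)) volume 0 1 := by
    apply ContinuousOn.intervalIntegrable
    apply ContinuousOn.mul continuousOn_const
    apply ContinuousOn.div continuousOn_const
    · exact (continuousOn_const.add (continuousOn_id.rpow_const
        fun t ht => Or.inr hα.le)).rpow_const
        fun t ht => Or.inl (hpos t (hnn t ht)).ne'
    · intro t ht
      exact (Real.rpow_pos_of_pos (hpos t (hnn t ht)) β).ne'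
  -- pointwise bound
  have hpt : ∀ t ∈ Set.Icc (0:ℝ) 1,
      1 / ((A + t ^ α) ^ β * (B + t) ^ η) ≤ B ^ (-η) * (1 / (A + t ^ α) ^ β) := by
    intro t ht
    have ht0 : 0 ≤ t := ht.1
    have h1 : 0 < (A + t ^ α) ^ β := Real.rpow_pos_of_pos (hpos t ht0) β
    have h2 : B ^ η ≤ (B + t) ^ η := Real.rpow_le_rpow hB.le (by linarith) hη.le
    rw [Real.rpow_neg hB.le, ← one_div, ← one_div_mul_one_div, mul_comm]
    exact mul_le_mul_of_nonneg_right
      (one_div_le_one_div_of_le (Real.rpow_pos_of_pos hB η) h2) (by positivity)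
  have step1 : (∫ t in (0:ℝ)..1, 1 / ((A + t ^ α) ^ β * (B + t) ^ η)) ≤
      B ^ (-η) * ∫ t in (0:ℝ)..1, 1 / (A + t ^ α) ^ β := by
    rw [← intervalIntegral.integral_const_mul]
    exact intervalIntegral.integral_mono_on zero_le_one hint hint2 hpt
  have step2 : (∫ t in (0:ℝ)..1, 1 / (A + t ^ α) ^ β) ≤
      (1 + 1 / (α * β - 1)) * A ^ (1 / α - β) :=
    stmt_6_aux α β hα hβ hαβ A hA
  have hBη : 0 < B ^ (-η) := Real.rpow_pos_of_pos hB _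
  have hfin : B ^ (-η) * ((1 + 1 / (α * β - 1)) * A ^ (1 / α - β)) =
      (1 + 1 / (α * β - 1)) / (A ^ (β - 1 / α) * B ^ η) := by
    rw [show (1 / α - β) = -(β - 1 / α) by ring, Real.rpow_neg hA.le,
      Real.rpow_neg hB.le]
    have h1 : A ^ (β - 1 / α) ≠ 0 := (Real.rpow_pos_of_pos hA _).ne'
    have h2 : (B : ℝ) ^ η ≠ 0 := (Real.rpow_pos_of_pos hB _).ne'
    field_simp
  calc (∫ t in (0:ℝ)..1, 1 / ((A + t ^ α) ^ β * (B + t) ^ η))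
      ≤ B ^ (-η) * ∫ t in (0:ℝ)..1, 1 / (A + t ^ α) ^ β := step1
    _ ≤ B ^ (-η) * ((1 + 1 / (α * β - 1)) * A ^ (1 / α - β)) := by
        exact mul_le_mul_of_nonneg_left step2 hBη.le
    _ = _ := hfin
end

section
/- Let α, β, η > 0 with αβ = 1, and let J(A,B) = ∫_0^1 dt / ((A + t^α)^β (B + t)^η). Then there exist finite constants c₁, c₂ depending only on α, β, η such that for all A, B > 0 with A^{1/α} ≤ c₁ B, J(A,B) ≤ (c₂ / B^η) · log(1 + B A^{-1/α}). -/
open MeasureTheory intervalIntegral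

theorem stmt_7 (α β η : ℝ) (hα : 0 < α) (hβ : 0 < β) (hη : 0 < η) (hαβ : α * β = 1) :
    ∃ c₁ c₂ : ℝ, 0 < c₁ ∧ 0 < c₂ ∧ ∀ A B : ℝ, 0 < A → 0 < B → A ^ (1 / α) ≤ c₁ * B →
      (∫ t in (0:ℝ)..1, 1 / ((A + t ^ α) ^ β * (B + t) ^ η)) ≤
        c₂ / B ^ η * Real.log (1 + B * A ^ (-(1 / α))) := by
  have hlog2 : (0:ℝ) < Real.log 2 := Real.log_pos (by norm_num)
  have hβα : β = 1 / α := by field_simp; linarith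
  refine ⟨1, 2 + 2 / (η * Real.log 2), one_pos, by positivity, ?_⟩
  intro A B hA hB hAB
  rw [one_mul] at hAB
  set a := A ^ β with ha_def
  have ha : 0 < a := Real.rpow_pos_of_pos hA β
  have haB : a ≤ B := by rwa [ha_def, hβα]
  have hAneg : A ^ (-(1 / α)) = a⁻¹ := by rw [Real.rpow_neg hA.le, ha_def, hβα]
  rw [hAneg]
  have hBa : B * a⁻¹ = B / a := by ring
  rw [hBa]
  set L := Real.log (1 + B / a) with hL_def
  have hL2 : Real.log 2 ≤ L := by
    apply Real.log_le_log (by norm_num)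
    have : (1:ℝ) ≤ B / a := (one_le_div ha).2 haB
    linarith
  have hL : 0 < L := lt_of_lt_of_le hlog2 hL2
  have hBη : (0:ℝ) < B ^ η := Real.rpow_pos_of_pos hB η
  -- the integrand
  set f : ℝ → ℝ := fun t => 1 / ((A + t ^ α) ^ β * (B + t) ^ η) with hf_def
  -- continuity of f on [0,1]
  have hcont : ContinuousOn f (Set.uIcc (0:ℝ) 1) := by
    have hIcc : Set.uIcc (0:ℝ) 1 = Set.Icc 0 1 := Set.uIcc_of_le (by norm_num)
    rw [hIcc]
    have h1 : ContinuousOn (fun t : ℝ => A + t ^ α) (Set.Icc 0 1) := by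
      apply continuousOn_const.add
      apply ContinuousOn.rpow_const continuousOn_id
      intro x _; right; exact hα.le
    have h2 : ContinuousOn (fun t : ℝ => (A + t ^ α) ^ β) (Set.Icc 0 1) := by
      apply h1.rpow_const; intro x hx
      left
      have : 0 ≤ x ^ α := Real.rpow_nonneg hx.1 α
      positivity
    have h3 : ContinuousOn (fun t : ℝ => (B + t) ^ η) (Set.Icc 0 1) := by
      apply ContinuousOn.rpow_const (continuousOn_const.add continuousOn_id)
      intro x hx; left; have := hx.1; exact (by linarith : (0:ℝ) < B + x).ne'
    apply ContinuousOn.div continuousOn_const (h2.mul h3)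
    intro x hx
    have hx1 : 0 < (A + x ^ α) ^ β := by
      have : 0 ≤ x ^ α := Real.rpow_nonneg hx.1 α
      apply Real.rpow_pos_of_pos; linarith
    have hx2 : 0 < (B + x) ^ η := Real.rpow_pos_of_pos (by linarith [hx.1]) η
    exact (mul_pos hx1 hx2).ne'
  have hfi : IntervalIntegrable f volume 0 1 := hcont.intervalIntegrable
  set b : ℝ := min B 1 with hb_def
  have hb0 : 0 < b := lt_min hB one_pos
  have hb1 : b ≤ 1 := min_le_right _ _
  have hbB : b ≤ B := min_le_left _ _
  have hsub1 : Set.uIcc (0:ℝ) b ⊆ Set.uIcc (0:ℝ) 1 :=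
    Set.uIcc_subset_uIcc Set.left_mem_uIcc (by rw [Set.uIcc_of_le (by norm_num)]; exact ⟨hb0.le, hb1⟩)
  have hsub2 : Set.uIcc b (1:ℝ) ⊆ Set.uIcc (0:ℝ) 1 :=
    Set.uIcc_subset_uIcc (by rw [Set.uIcc_of_le (by norm_num)]; exact ⟨hb0.le, hb1⟩) Set.right_mem_uIcc
  have hfi1 : IntervalIntegrable f volume 0 b := hfi.mono_set hsub1
  have hfi2 : IntervalIntegrable f volume b 1 := hfi.mono_set hsub2
  have hsplit : (∫ t in (0:ℝ)..1, f t) = (∫ t in (0:ℝ)..b, f t) + ∫ t in b..(1:ℝ), f t :=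
    (integral_add_adjacent_intervals hfi1 hfi2).symm
  -- pointwise bound: for 0 ≤ t, f t ≤ 2 / ((a + t) * (B + t) ^ η)
  have hkey : ∀ t : ℝ, 0 ≤ t → f t ≤ 2 / ((a + t) * (B + t) ^ η) := by
    intro t ht
    have htα : 0 ≤ t ^ α := Real.rpow_nonneg ht α
    have hD1 : a ≤ (A + t ^ α) ^ β :=
      Real.rpow_le_rpow hA.le (by linarith) hβ.le
    have hD2 : t ≤ (A + t ^ α) ^ β := by
      calc t = (t ^ α) ^ β := by
              rw [← Real.rpow_mul ht, hαβ, Real.rpow_one]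
           _ ≤ (A + t ^ α) ^ β := Real.rpow_le_rpow htα (by linarith) hβ.le
    have hBt : 0 < (B + t) ^ η := Real.rpow_pos_of_pos (by linarith) η
    have hat : 0 < a + t := by linarith
    have h2D : (a + t) / 2 ≤ (A + t ^ α) ^ β := by linarith
    have hAt : 0 < (A + t ^ α) ^ β := by
      apply Real.rpow_pos_of_pos; linarith
    rw [hf_def]
    rw [div_le_div_iff₀ (by positivity) (by positivity)]
    have : (a + t) * (B + t) ^ η ≤ 2 * ((A + t ^ α) ^ β * (B + t) ^ η) := by
      have := mul_le_mul_of_nonneg_right h2D hBt.le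
      nlinarith
    linarith
  -- First piece
  have hI1 : (∫ t in (0:ℝ)..b, f t) ≤ 2 / B ^ η * L := by
    have hg : ∀ t ∈ Set.uIcc (0:ℝ) b, f t ≤ 2 / B ^ η * (a + t)⁻¹ := by
      intro t ht
      rw [Set.uIcc_of_le hb0.le] at ht
      have ht0 : 0 ≤ t := ht.1
      have hBt : B ^ η ≤ (B + t) ^ η := Real.rpow_le_rpow hB.le (by linarith) hη.le
      have hat : 0 < a + t := by linarith
      calc f t ≤ 2 / ((a + t) * (B + t) ^ η) := hkey t ht0
        _ ≤ 2 / ((a + t) * B ^ η) := by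
            apply div_le_div_of_nonneg_left (by norm_num) (by positivity)
            exact mul_le_mul_of_nonneg_left hBt hat.le
        _ = 2 / B ^ η * (a + t)⁻¹ := by
            field_simp
    have hgi : IntervalIntegrable (fun t => 2 / B ^ η * (a + t)⁻¹) volume 0 b := by
      apply ContinuousOn.intervalIntegrable
      apply ContinuousOn.mul continuousOn_const
      apply ContinuousOn.inv₀ (continuousOn_const.add continuousOn_id)
      intro x hx
      rw [Set.uIcc_of_le hb0.le] at hx
      have := hx.1; exact (by linarith : (0:ℝ) < a + x).ne'
    calc (∫ t in (0:ℝ)..b, f t) ≤ ∫ t in (0:ℝ)..b, 2 / B ^ η * (a + t)⁻¹ := by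
          apply integral_mono_on hb0.le hfi1 hgi
          intro t ht
          exact hg t (by rwa [Set.uIcc_of_le hb0.le])
      _ = 2 / B ^ η * ∫ t in (0:ℝ)..b, (a + t)⁻¹ := integral_const_mul _ _
      _ ≤ 2 / B ^ η * L := by
          apply mul_le_mul_of_nonneg_left _ (by positivity)
          have : (∫ t in (0:ℝ)..b, (a + t)⁻¹) = ∫ x in a..(a + b), x⁻¹ := by
            simpa using integral_comp_add_left (fun x : ℝ => x⁻¹) a (a := 0) (b := b)
          rw [this, integral_inv (by
            rw [Set.uIcc_of_le (by linarith)]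
            intro h
            exact absurd h.1 (by linarith))]
          rw [hL_def]
          apply Real.log_le_log (by positivity)
          rw [div_le_iff₀ ha]
          have : (1 + B / a) * a = a + B := by field_simp
          rw [this]; linarith
  -- Second piece
  have hI2 : (∫ t in b..(1:ℝ), f t) ≤ 2 / (η * Real.log 2) / B ^ η * L := by
    have hRHS : 0 ≤ 2 / (η * Real.log 2) / B ^ η * L := by positivity
    rcases le_or_gt 1 B with hB1 | hB1
    · have : b = 1 := min_eq_right hB1
      rw [this, integral_same]
      exact hRHS
    · have hbB' : b = B := min_eq_left hB1.le
      rw [hbB']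
      have hg : ∀ t ∈ Set.Icc B (1:ℝ), f t ≤ 2 * t ^ (-(1 + η)) := by
        intro t ht
        have ht0 : 0 < t := lt_of_lt_of_le hB ht.1
        have h1 : t ≤ a + t := by linarith
        have h2 : t ^ η ≤ (B + t) ^ η := Real.rpow_le_rpow ht0.le (by linarith) hη.le
        have h3 : t * t ^ η ≤ (a + t) * (B + t) ^ η := by
          apply mul_le_mul h1 h2 (by positivity) (by linarith)
        have h4 : t * t ^ η = t ^ (1 + η) := by
          rw [Real.rpow_add ht0, Real.rpow_one]
        calc f t ≤ 2 / ((a + t) * (B + t) ^ η) := hkey t ht0.le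
          _ ≤ 2 / (t * t ^ η) := by
              apply div_le_div_of_nonneg_left (by norm_num) (by positivity) h3
          _ = 2 * t ^ (-(1 + η)) := by
              rw [h4, Real.rpow_neg ht0.le]; ring
      have hgi : IntervalIntegrable (fun t => 2 * t ^ (-(1 + η))) volume B 1 := by
        apply ContinuousOn.intervalIntegrable
        apply ContinuousOn.mul continuousOn_const
        apply ContinuousOn.rpow_const continuousOn_id
        intro x hx
        rw [Set.uIcc_of_le hB1.le] at hx
        left; exact ne_of_gt (lt_of_lt_of_le hB hx.1)
      have step1 : (∫ t in B..(1:ℝ), f t) ≤ ∫ t in B..(1:ℝ), 2 * t ^ (-(1 + η)) := by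
        apply integral_mono_on hB1.le (hfi2.mono_set (by rw [hbB'])) hgi
        exact hg
      have step2 : (∫ t in B..(1:ℝ), 2 * t ^ (-(1 + η))) = 2 * ((B ^ (-η) - 1) / η) := by
        rw [intervalIntegral.integral_const_mul, integral_rpow (Or.inr ⟨by intro h; nlinarith, by
            rw [Set.uIcc_of_le hB1.le]; intro h; exact absurd h.1 (by linarith)⟩)]
        have h1 : -(1 + η) + 1 = -η := by ring
        rw [h1, Real.one_rpow]
        field_simp [hη.ne']
        ring
      have step3 : 2 * ((B ^ (-η) - 1) / η) ≤ 2 / (η * Real.log 2) / B ^ η * L := by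
        have hBneg : B ^ (-η) = (B ^ η)⁻¹ := Real.rpow_neg hB.le η
        have h5 : 2 * ((B ^ (-η) - 1) / η) ≤ 2 / η * (B ^ η)⁻¹ := by
          rw [hBneg]
          rw [div_mul_eq_mul_div, mul_div_assoc]
          apply mul_le_mul_of_nonneg_left _ (by norm_num)
          apply div_le_div_of_nonneg_right _ hη.le
          have : 0 < (B ^ η)⁻¹ := by positivity
          linarith
        have h6 : 2 / η * (B ^ η)⁻¹ ≤ 2 / (η * Real.log 2) / B ^ η * L := by
          calc 2 / η * (B ^ η)⁻¹ = 2 / η * (B ^ η)⁻¹ * 1 := (mul_one _).symm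
            _ ≤ 2 / η * (B ^ η)⁻¹ * (L / Real.log 2) := by
                apply mul_le_mul_of_nonneg_left ((one_le_div hlog2).2 hL2) (by positivity)
            _ = 2 / (η * Real.log 2) / B ^ η * L := by
                field_simp
        linarith
      linarith
  calc (∫ t in (0:ℝ)..1, f t) = (∫ t in (0:ℝ)..b, f t) + ∫ t in b..(1:ℝ), f t := hsplit
    _ ≤ 2 / B ^ η * L + 2 / (η * Real.log 2) / B ^ η * L := add_le_add hI1 hI2
    _ = (2 + 2 / (η * Real.log 2)) / B ^ η * L := by ring
end

section
/- Let α, β, η > 0 with 0 < αβ < 1 and αβ + η ≠ 1, and let J(A,B) = ∫_0^1 dt / ((A + t^α)^β (B + t)^η). Then there exist finite constants c₁, c₂ depending only on α, β, η such that for all A, B > 0 with A^{1/α} ≤ c₁ B, J(A,B) ≤ c₂(B^{-(αβ+η-1)} + 1). -/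
open MeasureTheory intervalIntegral

private lemma one_div_le_aux {x y u v : ℝ} (hu : 0 < u) (hv : 0 < v)
    (hx : u ≤ x) (hy : v ≤ y) : 1 / (x * y) ≤ 1 / (u * v) :=
  one_div_le_one_div_of_le (mul_pos hu hv)
    (mul_le_mul hx hy hv.le ((hu.trans_le hx).le))

private lemma rpow_ab_le {α β A t : ℝ} (hβ : 0 < β) (hA : 0 < A) (ht : 0 ≤ t) :
    t ^ (α * β) ≤ (A + t ^ α) ^ β := by
  rw [Real.rpow_mul ht]
  exact Real.rpow_le_rpow (Real.rpow_nonneg ht α)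
    (le_add_of_nonneg_left hA.le) hβ.le

private lemma integrable_aux {α β η A B : ℝ} (hα : 0 < α) (hA : 0 < A) (hB : 0 < B)
    {a b : ℝ} (ha : 0 ≤ a) (hb : 0 ≤ b) :
    IntervalIntegrable (fun t => 1 / ((A + t ^ α) ^ β * (B + t) ^ η)) volume a b := by
  apply ContinuousOn.intervalIntegrable
  intro t ht
  have ht0 : 0 ≤ t := by
    rcases Set.mem_uIcc.1 ht with h | h
    · exact le_trans ha h.1
    · exact le_trans hb h.1
  have h1 : ContinuousAt (fun t : ℝ => t ^ α) t :=
    Real.continuousAt_rpow_const t α (Or.inr hα.le)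
  have hApos : 0 < A + t ^ α := by positivity
  have hBpos : 0 < B + t := by positivity
  have h2 : ContinuousAt (fun t : ℝ => (A + t ^ α) ^ β) t :=
    (continuousAt_const.add h1).rpow_const (Or.inl hApos.ne')
  have h3 : ContinuousAt (fun t : ℝ => (B + t) ^ η) t :=
    (continuousAt_const.add continuousAt_id).rpow_const (Or.inl hBpos.ne')
  have h4 : ContinuousAt (fun t : ℝ => 1 / ((A + t ^ α) ^ β * (B + t) ^ η)) t := by
    apply ContinuousAt.div continuousAt_const (h2.mul h3)
    exact (mul_pos (Real.rpow_pos_of_pos hApos _) (Real.rpow_pos_of_pos hBpos _)).ne'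
  exact h4.continuousWithinAt

theorem stmt_8 (α β η : ℝ) (hα : 0 < α) (hβ : 0 < β) (hη : 0 < η)
    (hαβ : α * β < 1) (hne : α * β + η ≠ 1) :
    ∃ c₁ c₂ : ℝ, 0 < c₁ ∧ 0 < c₂ ∧ ∀ A B : ℝ, 0 < A → 0 < B → A ^ (1 / α) ≤ c₁ * B →
      (∫ t in (0:ℝ)..1, 1 / ((A + t ^ α) ^ β * (B + t) ^ η)) ≤
        c₂ * (B ^ (-(α * β + η - 1)) + 1) := by
  have hab0 : 0 < α * β := mul_pos hα hβ
  set K : ℝ := α * β + η with hKdef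
  have hK0 : 0 < K := by positivity
  set C : ℝ := (1 - α * β)⁻¹ + |K - 1|⁻¹ + 1 with hCdef
  have hC0 : 0 < C := by
    have h1 : 0 < (1 - α * β)⁻¹ := by
      apply inv_pos.2; linarith
    have h2 : 0 ≤ |K - 1|⁻¹ := by positivity
    rw [hCdef]
    linarith
  refine ⟨1, C, one_pos, hC0, ?_⟩
  intro A B hA hB _
  have hBexp : 0 < B ^ (-(K - 1)) := Real.rpow_pos_of_pos hB _
  have hint_f : ∀ a b : ℝ, 0 ≤ a → 0 ≤ b →
      IntervalIntegrable (fun t => 1 / ((A + t ^ α) ^ β * (B + t) ^ η)) volume a b :=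
    fun a b ha hb => integrable_aux hα hA hB ha hb
  have hae : ∀ b : ℝ, ∀ᵐ t ∂(volume.restrict (Set.Icc (0:ℝ) b)), t ∈ Set.Ioc (0:ℝ) b := by
    intro b
    have h1 : ∀ᵐ t : ℝ, t ≠ 0 := by
      rw [MeasureTheory.ae_iff]
      simp
    filter_upwards [MeasureTheory.ae_restrict_of_ae h1,
      MeasureTheory.ae_restrict_mem measurableSet_Icc] with t h1 h2
    exact ⟨lt_of_le_of_ne h2.1 (Ne.symm h1), h2.2⟩
  rcases lt_or_gt_of_ne hne with hK1 | hK1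
  -- Case K < 1
  · have hint_g : IntervalIntegrable (fun t : ℝ => t ^ (-K)) volume 0 1 :=
      intervalIntegrable_rpow' (by linarith)
    have hmono : (∫ t in (0:ℝ)..1, 1 / ((A + t ^ α) ^ β * (B + t) ^ η))
        ≤ ∫ t in (0:ℝ)..1, t ^ (-K) := by
      apply integral_mono_ae_restrict zero_le_one (hint_f 0 1 le_rfl zero_le_one) hint_g
      filter_upwards [hae 1] with t ht
      have ht0 : 0 < t := ht.1
      have key : t ^ (α * β) * t ^ η ≤ (A + t ^ α) ^ β * (B + t) ^ η := by
        refine mul_le_mul (rpow_ab_le hβ hA ht0.le)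
          (Real.rpow_le_rpow ht0.le (le_add_of_nonneg_left hB.le) hη.le)
          (Real.rpow_nonneg ht0.le η) (by positivity)
      calc 1 / ((A + t ^ α) ^ β * (B + t) ^ η)
          ≤ 1 / (t ^ (α * β) * t ^ η) :=
            one_div_le_aux (Real.rpow_pos_of_pos ht0 _) (Real.rpow_pos_of_pos ht0 _)
              (rpow_ab_le hβ hA ht0.le)
              (Real.rpow_le_rpow ht0.le (le_add_of_nonneg_left hB.le) hη.le)
        _ = t ^ (-K) := by
            rw [← Real.rpow_add ht0, Real.rpow_neg ht0.le, one_div]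
    have hval : (∫ t in (0:ℝ)..1, t ^ (-K)) = (1 - K)⁻¹ := by
      rw [integral_rpow (Or.inl (by linarith))]
      rw [Real.one_rpow, Real.zero_rpow (by linarith : -K + 1 ≠ 0)]
      rw [show -K + 1 = 1 - K by ring]
      ring
    have hCge : (1 - K)⁻¹ ≤ C := by
      rw [hCdef]
      have : |K - 1|⁻¹ = (1 - K)⁻¹ := by
        rw [abs_of_neg (by linarith : K - 1 < 0)]
        ring_nf
      have h1 : 0 < (1 - α * β)⁻¹ := inv_pos.2 (by linarith)
      linarith
    calc (∫ t in (0:ℝ)..1, 1 / ((A + t ^ α) ^ β * (B + t) ^ η))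
        ≤ (1 - K)⁻¹ := hval ▸ hmono
      _ ≤ C := hCge
      _ = C * 1 := (mul_one C).symm
      _ ≤ C * (B ^ (-(K - 1)) + 1) := by
          apply mul_le_mul_of_nonneg_left _ hC0.le
          linarith
  -- Case K > 1
  · rcases le_or_gt 1 B with hB1 | hB1
    -- Subcase B ≥ 1
    · have hint_g : IntervalIntegrable (fun t : ℝ => t ^ (-(α * β))) volume 0 1 :=
        intervalIntegrable_rpow' (by linarith)
      have hmono : (∫ t in (0:ℝ)..1, 1 / ((A + t ^ α) ^ β * (B + t) ^ η))
          ≤ ∫ t in (0:ℝ)..1, t ^ (-(α * β)) := by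
        apply integral_mono_ae_restrict zero_le_one (hint_f 0 1 le_rfl zero_le_one) hint_g
        filter_upwards [hae 1] with t ht
        have ht0 : 0 < t := ht.1
        calc 1 / ((A + t ^ α) ^ β * (B + t) ^ η)
            ≤ 1 / (t ^ (α * β) * 1) :=
              one_div_le_aux (Real.rpow_pos_of_pos ht0 _) one_pos
                (rpow_ab_le hβ hA ht0.le)
                (Real.one_le_rpow (by linarith) hη.le)
          _ = t ^ (-(α * β)) := by
              rw [mul_one, Real.rpow_neg ht0.le, one_div]
      have hval : (∫ t in (0:ℝ)..1, t ^ (-(α * β))) = (1 - α * β)⁻¹ := by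
        rw [integral_rpow (Or.inl (by linarith))]
        rw [Real.one_rpow, Real.zero_rpow (by linarith : -(α * β) + 1 ≠ 0)]
        rw [show -(α * β) + 1 = 1 - α * β by ring]
        ring
      have hCge : (1 - α * β)⁻¹ ≤ C := by
        rw [hCdef]
        have h2 : 0 ≤ |K - 1|⁻¹ := by positivity
        linarith
      calc (∫ t in (0:ℝ)..1, 1 / ((A + t ^ α) ^ β * (B + t) ^ η))
          ≤ (1 - α * β)⁻¹ := hval ▸ hmono
        _ ≤ C := hCge
        _ = C * 1 := (mul_one C).symm
        _ ≤ C * (B ^ (-(K - 1)) + 1) := by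
            apply mul_le_mul_of_nonneg_left _ hC0.le
            linarith
    -- Subcase B < 1
    · have hsplit : (∫ t in (0:ℝ)..1, 1 / ((A + t ^ α) ^ β * (B + t) ^ η))
          = (∫ t in (0:ℝ)..B, 1 / ((A + t ^ α) ^ β * (B + t) ^ η))
            + ∫ t in B..1, 1 / ((A + t ^ α) ^ β * (B + t) ^ η) :=
        (integral_add_adjacent_intervals (hint_f 0 B le_rfl hB.le)
          (hint_f B 1 hB.le zero_le_one)).symm
      -- first piece
      have hint_g1 : IntervalIntegrable (fun t : ℝ => t ^ (-(α * β)) * B ^ (-η)) volume 0 B :=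
        (intervalIntegrable_rpow' (by linarith)).mul_const _
      have hmono1 : (∫ t in (0:ℝ)..B, 1 / ((A + t ^ α) ^ β * (B + t) ^ η))
          ≤ ∫ t in (0:ℝ)..B, t ^ (-(α * β)) * B ^ (-η) := by
        apply integral_mono_ae_restrict hB.le (hint_f 0 B le_rfl hB.le) hint_g1
        filter_upwards [hae B] with t ht
        have ht0 : 0 < t := ht.1
        calc 1 / ((A + t ^ α) ^ β * (B + t) ^ η)
            ≤ 1 / (t ^ (α * β) * B ^ η) :=
              one_div_le_aux (Real.rpow_pos_of_pos ht0 _) (Real.rpow_pos_of_pos hB _)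
                (rpow_ab_le hβ hA ht0.le)
                (Real.rpow_le_rpow hB.le (le_add_of_nonneg_right ht0.le) hη.le)
          _ = t ^ (-(α * β)) * B ^ (-η) := by
              rw [Real.rpow_neg ht0.le, Real.rpow_neg hB.le, one_div, mul_inv]
      have hval1 : (∫ t in (0:ℝ)..B, t ^ (-(α * β)) * B ^ (-η))
          = B ^ (-(K - 1)) * (1 - α * β)⁻¹ := by
        rw [intervalIntegral.integral_mul_const, integral_rpow (Or.inl (by linarith))]
        rw [Real.zero_rpow (by linarith : -(α * β) + 1 ≠ 0)]
        rw [show -(α * β) + 1 = 1 - α * β by ring, sub_zero]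
        rw [div_eq_mul_inv, mul_comm (B ^ (1 - α * β)) _, mul_assoc, mul_comm _ (B ^ (-η)),
          ← Real.rpow_add hB]
        rw [show -η + (1 - α * β) = -(K - 1) by rw [hKdef]; ring]
        ring
      -- second piece
      have hint_g2 : IntervalIntegrable (fun t : ℝ => t ^ (-K)) volume B 1 := by
        apply intervalIntegrable_rpow
        right
        rw [Set.mem_uIcc]
        push_neg
        constructor <;> intro h <;> linarith
      have hmono2 : (∫ t in B..1, 1 / ((A + t ^ α) ^ β * (B + t) ^ η))
          ≤ ∫ t in B..1, t ^ (-K) := by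
        apply integral_mono_on hB1.le (hint_f B 1 hB.le zero_le_one) hint_g2
        intro t ht
        have ht0 : 0 < t := lt_of_lt_of_le hB ht.1
        calc 1 / ((A + t ^ α) ^ β * (B + t) ^ η)
            ≤ 1 / (t ^ (α * β) * t ^ η) :=
              one_div_le_aux (Real.rpow_pos_of_pos ht0 _) (Real.rpow_pos_of_pos ht0 _)
                (rpow_ab_le hβ hA ht0.le)
                (Real.rpow_le_rpow ht0.le (le_add_of_nonneg_left hB.le) hη.le)
          _ = t ^ (-K) := by
              rw [← Real.rpow_add ht0, Real.rpow_neg ht0.le, one_div]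
      have hval2 : (∫ t in B..1, t ^ (-K)) ≤ B ^ (-(K - 1)) * (K - 1)⁻¹ := by
        rw [integral_rpow]
        · rw [Real.one_rpow]
          rw [show -K + 1 = -(K - 1) by ring]
          rw [div_eq_mul_inv]
          rw [show (1 - B ^ (-(K - 1))) * (-(K - 1))⁻¹
              = (B ^ (-(K - 1)) - 1) * (K - 1)⁻¹ by
            rw [show (-(K - 1))⁻¹ = -(K - 1)⁻¹ by rw [neg_inv]]
            ring]
          have h1 : 0 < (K - 1)⁻¹ := inv_pos.2 (by linarith)
          nlinarith
        · right
          constructor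
          · intro h
            exact hne (by linarith [neg_eq_iff_eq_neg.1 h])
          · rw [Set.mem_uIcc]
            push_neg
            constructor <;> intro h <;> linarith
      -- combine
      have habs : |K - 1|⁻¹ = (K - 1)⁻¹ := by
        rw [abs_of_pos (by linarith : 0 < K - 1)]
      have hCge : (1 - α * β)⁻¹ + (K - 1)⁻¹ ≤ C := by
        rw [hCdef, habs]; linarith
      calc (∫ t in (0:ℝ)..1, 1 / ((A + t ^ α) ^ β * (B + t) ^ η))
          = (∫ t in (0:ℝ)..B, 1 / ((A + t ^ α) ^ β * (B + t) ^ η))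
            + ∫ t in B..1, 1 / ((A + t ^ α) ^ β * (B + t) ^ η) := hsplit
        _ ≤ B ^ (-(K - 1)) * (1 - α * β)⁻¹ + B ^ (-(K - 1)) * (K - 1)⁻¹ := by
            have := hmono1.trans_eq hval1
            have := hmono2.trans hval2
            linarith
        _ = B ^ (-(K - 1)) * ((1 - α * β)⁻¹ + (K - 1)⁻¹) := by ring
        _ ≤ B ^ (-(K - 1)) * C := by
            apply mul_le_mul_of_nonneg_left hCge hBexp.le
        _ ≤ C * (B ^ (-(K - 1)) + 1) := by nlinarith
end

section
/- Let (ρ₁,…,ρ_N) ∈ (0,1)^N and let q ∈ [0, ∑_{ℓ=1}^N ρ_ℓ^{-1}). Let τ ∈ {1,…,N} be the unique integer with ∑_{ℓ=1}^{τ-1} 1/ρ_ℓ ≤ q < ∑_{ℓ=1}^τ 1/ρ_ℓ (with the convention ∑_{ℓ=1}^0 1/ρ_ℓ = 0). Then there exists Δ_τ ∈ (0,1] depending only on (ρ₁,…,ρ_N) such that for every Δ ∈ (0, Δ_τ) there exist real numbers p_ℓ ≥ 1 (1 ≤ ℓ ≤ τ) with ∑_{ℓ=1}^τ 1/p_ℓ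 = 1, ρ_ℓ q / p_ℓ < 1 for all ℓ = 1,…,τ, and (1-Δ)∑_{ℓ=1}^τ ρ_ℓ q / p_ℓ ≤ ρ_τ q + τ - ∑_{ℓ=1}^τ ρ_τ/ρ_ℓ. -/
open Finset

set_option maxHeartbeats 1600000 in
theorem stmt_12 (N : ℕ) (hN : 1 ≤ N) (ρ : ℕ → ℝ) (hρ : ∀ ℓ < N, 0 < ρ ℓ ∧ ρ ℓ < 1)
    (q : ℝ) (hq0 : 0 ≤ q) (hq1 : q < ∑ ℓ ∈ range N, 1 / ρ ℓ)
    (τ : ℕ) (hτ1 : 1 ≤ τ) (hτN : τ ≤ N)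
    (hτlow : ∑ ℓ ∈ range (τ - 1), 1 / ρ ℓ ≤ q) (hτhigh : q < ∑ ℓ ∈ range τ, 1 / ρ ℓ) :
    ∃ Δτ : ℝ, 0 < Δτ ∧ Δτ ≤ 1 ∧ ∀ Δ : ℝ, 0 < Δ → Δ < Δτ →
      ∃ p : ℕ → ℝ, (∀ ℓ < τ, 1 ≤ p ℓ) ∧ (∑ ℓ ∈ range τ, 1 / p ℓ) = 1 ∧
        (∀ ℓ < τ, ρ ℓ * q / p ℓ < 1) ∧
        (1 - Δ) * ∑ ℓ ∈ range τ, ρ ℓ * q / p ℓ ≤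
          ρ (τ - 1) * q + τ - ∑ ℓ ∈ range τ, ρ (τ - 1) / ρ ℓ := by
  refine ⟨1, one_pos, le_refl 1, fun Δ hΔ0 hΔ1 => ?_⟩
  obtain ⟨t, rfl⟩ : ∃ t, τ = t + 1 := ⟨τ - 1, (Nat.succ_pred_eq_of_pos hτ1).symm⟩
  simp only [Nat.add_sub_cancel] at hτlow ⊢
  have hρpos : ∀ ℓ < t + 1, 0 < ρ ℓ := fun ℓ hℓ => (hρ ℓ (lt_of_lt_of_le hℓ hτN)).1
  have hr0 : 0 < ρ t := hρpos t (Nat.lt_succ_self t)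
  rcases Nat.eq_zero_or_pos t with rfl | ht
  · -- τ = 1 case
    refine ⟨fun _ => 1, fun ℓ _ => le_refl 1, by simp, ?_, ?_⟩
    · intro ℓ hℓ
      interval_cases ℓ
      have : q < 1 / ρ 0 := by simpa using hτhigh
      rw [div_one]
      calc ρ 0 * q < ρ 0 * (1 / ρ 0) := by
            apply mul_lt_mul_of_pos_left this hr0
        _ = 1 := by field_simp
    · have h1 : ρ 0 / ρ 0 = 1 := div_self (ne_of_gt hr0)
      simp only [zero_add, Finset.sum_range_one, h1, Nat.cast_one, div_one]
      have h2 : 0 ≤ ρ 0 * q := mul_nonneg hr0.le hq0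
      nlinarith
  · -- τ = t + 1, t ≥ 1
    obtain ⟨S', hS'def⟩ : ∃ x : ℝ, x = ∑ ℓ ∈ range t, 1 / ρ ℓ := ⟨_, rfl⟩
    obtain ⟨r, hrdef⟩ : ∃ x : ℝ, x = ρ t := ⟨_, rfl⟩
    have hS'q : S' ≤ q := by rw [hS'def]; exact hτlow
    have hr0' : 0 < r := hrdef ▸ hr0
    have hqS : q < S' + 1 / r := by
      rw [hS'def, hrdef]
      have := hτhigh
      rwa [Finset.sum_range_succ] at this
    have hterm : ∀ ℓ < t, 1 / ρ ℓ ≤ S' := by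
      intro ℓ hℓ
      rw [hS'def]
      apply Finset.single_le_sum (f := fun i => 1 / ρ i) _ (Finset.mem_range.2 hℓ)
      intro i hi
      have := hρpos i (Nat.lt_succ_of_lt (Finset.mem_range.1 hi))
      positivity
    have hS'pos : 0 < S' := by
      have h0t : (0 : ℕ) < t := ht
      have h00 := hρpos 0 (Nat.lt_succ_of_lt h0t)
      have h01 : 0 < 1 / ρ 0 := by positivity
      linarith [hterm 0 h0t]
    have hqpos : 0 < q := lt_of_lt_of_le hS'pos hS'q
    have hrq1 : r * (q - S') < 1 := by
      have h1 : q - S' < 1 / r := by linarith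
      calc r * (q - S') < r * (1 / r) := mul_lt_mul_of_pos_left h1 hr0'
        _ = 1 := by field_simp
    have hrqS0 : 0 ≤ r * (q - S') := mul_nonneg hr0'.le (by linarith)
    have hrS'pos : 0 < r * S' := mul_pos hr0' hS'pos
    -- choose δ
    obtain ⟨δ, hδ0, hδ1, hδbound1, hδbound2⟩ :
        ∃ δ : ℝ, 0 < δ ∧ δ < 1 ∧ δ * (r * S' + 1) ≤ (1 - r * (q - S')) / 2 ∧
          δ * (|r * S' - t| + 1) ≤ Δ / 2 := by
      have habspos : 0 < |r * S' - (t : ℝ)| + 1 := by positivity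
      have hd1pos : 0 < (1 - r * (q - S')) / (r * S' + 1) :=
        div_pos (by linarith) (by linarith)
      have hd2pos : 0 < Δ / (|r * S' - (t : ℝ)| + 1) := div_pos hΔ0 habspos
      refine ⟨(min ((1 - r * (q - S')) / (r * S' + 1)) (Δ / (|r * S' - (t : ℝ)| + 1))) / 2,
        by positivity, ?_, ?_, ?_⟩
      · have h1 : (1 - r * (q - S')) / (r * S' + 1) ≤ 1 := by
          rw [div_le_one (by linarith)]
          linarith
        have := min_le_left ((1 - r * (q - S')) / (r * S' + 1))
          (Δ / (|r * S' - (t : ℝ)| + 1))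
        linarith
      · have hx : (min ((1 - r * (q - S')) / (r * S' + 1))
            (Δ / (|r * S' - (t : ℝ)| + 1))) / 2 ≤
            (1 - r * (q - S')) / (r * S' + 1) / 2 := by
          have := min_le_left ((1 - r * (q - S')) / (r * S' + 1))
            (Δ / (|r * S' - (t : ℝ)| + 1))
          linarith
        calc (min ((1 - r * (q - S')) / (r * S' + 1))
              (Δ / (|r * S' - (t : ℝ)| + 1))) / 2 * (r * S' + 1)
            ≤ (1 - r * (q - S')) / (r * S' + 1) / 2 * (r * S' + 1) :=
              mul_le_mul_of_nonneg_right hx (by linarith)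
          _ = (1 - r * (q - S')) / 2 := by
              field_simp
      · have hx : (min ((1 - r * (q - S')) / (r * S' + 1))
            (Δ / (|r * S' - (t : ℝ)| + 1))) / 2 ≤
            Δ / (|r * S' - (t : ℝ)| + 1) / 2 := by
          have := min_le_right ((1 - r * (q - S')) / (r * S' + 1))
            (Δ / (|r * S' - (t : ℝ)| + 1))
          linarith
        calc (min ((1 - r * (q - S')) / (r * S' + 1))
              (Δ / (|r * S' - (t : ℝ)| + 1))) / 2 * (|r * S' - (t : ℝ)| + 1)
            ≤ Δ / (|r * S' - (t : ℝ)| + 1) / 2 * (|r * S' - (t : ℝ)| + 1) :=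
              mul_le_mul_of_nonneg_right hx habspos.le
          _ = Δ / 2 := by field_simp
    obtain ⟨a, hadef⟩ : ∃ x : ℝ, x = 1 - δ := ⟨_, rfl⟩
    have ha0 : 0 < a := by rw [hadef]; linarith
    have ha1 : a < 1 := by rw [hadef]; linarith
    have hqa : 0 < q - a * S' := by
      have h1 : a * S' < S' := by nlinarith
      linarith
    have hqane : q - a * S' ≠ 0 := ne_of_gt hqa
    have hqne : q ≠ 0 := ne_of_gt hqpos
    have hane : a ≠ 0 := ne_of_gt ha0
    have hlast_lt : r * (q - a * S') < 1 := by
      have h1 : δ * (r * S') ≤ δ * (r * S' + 1) :=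
        mul_le_mul_of_nonneg_left (le_of_lt (lt_add_one (r * S'))) hδ0.le
      have hsplit : r * (q - a * S') = r * (q - S') + δ * (r * S') := by
        rw [hadef]; ring
      rw [hsplit]
      linarith
    obtain ⟨p, hpdef⟩ : ∃ p : ℕ → ℝ,
        p = fun ℓ => if ℓ < t then ρ ℓ * q / a else q / (q - a * S') := ⟨_, rfl⟩
    have hρqge1 : ∀ ℓ < t, 1 ≤ ρ ℓ * q := by
      intro ℓ hℓ
      have hρℓ : 0 < ρ ℓ := hρpos ℓ (Nat.lt_succ_of_lt hℓ)
      have h1 : 1 / ρ ℓ ≤ S' := hterm ℓ hℓ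
      have h2 : 1 ≤ ρ ℓ * S' := by
        rw [div_le_iff₀ hρℓ] at h1
        nlinarith
      nlinarith
    have hinv_small : ∀ ℓ < t, ρ ℓ * q / p ℓ = a := by
      intro ℓ hℓ
      have hρℓ : 0 < ρ ℓ := hρpos ℓ (Nat.lt_succ_of_lt hℓ)
      have hne : ρ ℓ * q ≠ 0 := by positivity
      simp only [hpdef, if_pos hℓ]
      rw [div_div_eq_mul_div, mul_comm (ρ ℓ * q) a, mul_div_assoc, div_self hne, mul_one]
    have hinv_last : ρ t * q / p t = r * (q - a * S') := by
      simp only [hpdef, if_neg (lt_irrefl t), ← hrdef]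
      rw [div_div_eq_mul_div]
      rw [show r * q * (q - a * S') = r * (q - a * S') * q by ring]
      rw [mul_div_assoc, div_self hqne, mul_one]
    have hone_div : ∀ ℓ < t, 1 / p ℓ = a / q * (1 / ρ ℓ) := by
      intro ℓ hℓ
      have hρℓ : 0 < ρ ℓ := hρpos ℓ (Nat.lt_succ_of_lt hℓ)
      simp only [hpdef, if_pos hℓ]
      rw [one_div_div, div_mul_div_comm, mul_one, mul_comm q (ρ ℓ)]
    refine ⟨p, ?_, ?_, ?_, ?_⟩
    · -- 1 ≤ p ℓ
      intro ℓ hℓ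
      rcases Nat.lt_succ_iff_lt_or_eq.1 hℓ with h | rfl
      · simp only [hpdef, if_pos h]
        rw [le_div_iff₀ ha0, one_mul]
        have := hρqge1 ℓ h
        linarith
      · simp only [hpdef, if_neg (lt_irrefl ℓ)]
        rw [le_div_iff₀ hqa, one_mul]
        have : 0 ≤ a * S' := mul_nonneg ha0.le hS'pos.le
        linarith
    · -- sum of 1/p = 1
      rw [Finset.sum_range_succ]
      rw [Finset.sum_congr rfl fun ℓ hℓ => hone_div ℓ (Finset.mem_range.1 hℓ)]
      rw [← Finset.mul_sum, ← hS'def]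
      simp only [hpdef, if_neg (lt_irrefl t)]
      rw [one_div_div, div_mul_eq_mul_div, ← add_div,
        show a * S' + (q - a * S') = q from by ring, div_self hqne]
    · -- each ρ ℓ * q / p ℓ < 1
      intro ℓ hℓ
      rcases Nat.lt_succ_iff_lt_or_eq.1 hℓ with h | rfl
      · rw [hinv_small ℓ h]; exact ha1
      · rw [hinv_last]; exact hlast_lt
    · -- final inequality
      have hsum : ∑ ℓ ∈ range (t + 1), ρ ℓ * q / p ℓ = t * a + r * (q - a * S') := by
        rw [Finset.sum_range_succ]
        rw [Finset.sum_congr rfl fun ℓ hℓ => hinv_small ℓ (Finset.mem_range.1 hℓ)]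
        rw [Finset.sum_const, Finset.card_range, hinv_last, nsmul_eq_mul]
      have hsumρ : ∑ ℓ ∈ range (t + 1), ρ t / ρ ℓ = r * S' + 1 := by
        rw [Finset.sum_range_succ, div_self (ne_of_gt hr0), hS'def, Finset.mul_sum]
        congr 1
        apply Finset.sum_congr rfl
        intro ℓ hℓ
        rw [mul_one_div, hrdef]
      rw [hsum, hsumρ, ← hrdef]
      clear hsum hsumρ hinv_small hinv_last hone_div hpdef
      clear p
      clear hρ hq1 hτhigh hτlow hterm hρpos hρqge1 hlast_lt hS'def
      push_cast
      have hR1 : (1:ℝ) ≤ (t:ℝ) := by exact_mod_cast ht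
      have hCabs : r * S' - (t:ℝ) ≤ |r * S' - (t:ℝ)| := le_abs_self _
      have hCabs' : -(r * S' - (t:ℝ)) ≤ |r * S' - (t:ℝ)| := neg_le_abs _
      have habs0 : 0 ≤ |r * S' - (t:ℝ)| := abs_nonneg _
      have hkey : (t:ℝ) * a + r * (q - a * S') =
          ((t:ℝ) + r * (q - S')) + δ * (r * S' - (t:ℝ)) := by
        rw [hadef]; ring
      rw [hkey]
      have hδC : δ * (r * S' - (t:ℝ)) ≤ δ * |r * S' - (t:ℝ)| :=
        mul_le_mul_of_nonneg_left hCabs hδ0.le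
      have hδC' : -(δ * (r * S' - (t:ℝ))) ≤ δ * |r * S' - (t:ℝ)| := by
        have h := mul_le_mul_of_nonneg_left hCabs' hδ0.le
        rwa [mul_neg] at h
      have hΔδC : Δ * (-(δ * (r * S' - (t:ℝ)))) ≤ Δ * (δ * |r * S' - (t:ℝ)|) :=
        mul_le_mul_of_nonneg_left hδC' hΔ0.le
      have hΔδC2 : Δ * (δ * |r * S' - (t:ℝ)|) ≤ δ * |r * S' - (t:ℝ)| := by
        have h0 : 0 ≤ δ * |r * S' - (t:ℝ)| := mul_nonneg hδ0.le habs0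
        calc Δ * (δ * |r * S' - (t:ℝ)|) ≤ 1 * (δ * |r * S' - (t:ℝ)|) :=
              mul_le_mul_of_nonneg_right hΔ1.le h0
          _ = δ * |r * S' - (t:ℝ)| := one_mul _
      have hΔR : Δ * 1 ≤ Δ * ((t:ℝ) + r * (q - S')) := by
        apply mul_le_mul_of_nonneg_left _ hΔ0.le
        linarith
      linarith [hδbound2, hδC, hΔδC, hΔδC2, hΔR, hδ0]
end

section
/- With the notation and conclusions of Lemma 2.10: set α_τ := ∑_{ℓ=1}^τ 1/ρ_ℓ - q > 0. Then for any ρ ∈ (0, α_τ/(2τ)), there exists ℓ₀ ∈ {1,…,τ} such that ρ_{ℓ₀} q / p_{ℓ₀} + 2 ρ_{ℓ₀} ρ < 1. -/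
open Finset

theorem stmt_13 (N : ℕ) (hN : 1 ≤ N) (ρ : ℕ → ℝ) (hρ : ∀ ℓ < N, 0 < ρ ℓ ∧ ρ ℓ < 1)
    (q : ℝ) (hq0 : 0 ≤ q) (hq1 : q < ∑ ℓ ∈ range N, 1 / ρ ℓ)
    (τ : ℕ) (hτ1 : 1 ≤ τ) (hτN : τ ≤ N)
    (hτlow : ∑ ℓ ∈ range (τ - 1), 1 / ρ ℓ ≤ q) (hτhigh : q < ∑ ℓ ∈ range τ, 1 / ρ ℓ)
    (p : ℕ → ℝ) (hp1 : ∀ ℓ < τ, 1 ≤ p ℓ) (hpsum : (∑ ℓ ∈ range τ, 1 / p ℓ) = 1)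
    (hpq : ∀ ℓ < τ, ρ ℓ * q / p ℓ < 1) :
    0 < (∑ ℓ ∈ range τ, 1 / ρ ℓ) - q ∧
      ∀ ρ' : ℝ, 0 < ρ' → ρ' < ((∑ ℓ ∈ range τ, 1 / ρ ℓ) - q) / (2 * τ) →
        ∃ ℓ₀ < τ, ρ ℓ₀ * q / p ℓ₀ + 2 * ρ ℓ₀ * ρ' < 1 := by
  refine ⟨by linarith, ?_⟩
  intro ρ' hρ'0 hρ'lt
  by_contra h
  push_neg at h
  have hτpos : (0:ℝ) < τ := by exact_mod_cast hτ1
  have key : ∀ ℓ ∈ range τ, 1 / ρ ℓ ≤ q * (1 / p ℓ) + 2 * ρ' := by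
    intro ℓ hℓ
    rw [mem_range] at hℓ
    obtain ⟨hρpos, _⟩ := hρ ℓ (lt_of_lt_of_le hℓ hτN)
    have hpℓ := hp1 ℓ hℓ
    have h1 := h ℓ hℓ
    have hppos : (0:ℝ) < p ℓ := lt_of_lt_of_le one_pos hpℓ
    rw [div_le_iff₀ hρpos]
    have : ρ ℓ * q / p ℓ = ρ ℓ * (q / p ℓ) := by ring
    rw [this] at h1
    have h2 : ρ ℓ * (q / p ℓ) + 2 * ρ ℓ * ρ' = (q * (1 / p ℓ) + 2 * ρ') * ρ ℓ := by ring
    linarith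
  have hsum := Finset.sum_le_sum key
  rw [Finset.sum_add_distrib, ← Finset.mul_sum, hpsum, Finset.sum_const, card_range] at hsum
  rw [nsmul_eq_mul] at hsum
  have hlt : ρ' * (2 * τ) < (∑ ℓ ∈ range τ, 1 / ρ ℓ) - q := by
    rwa [lt_div_iff₀ (by positivity)] at hρ'lt
  nlinarith
end

section
/- Let 0 < ε < Λ and β'_j ≤ β_j be numbers in [α, γ] ⊂ (0,1). Then there is a finite constant c depending only on α, γ, ε, Λ such that ∫_{-∞}^0 [((t-u)^{β_j-1/2} - (-u)^{β_j-1/2}) - ((t-u)^{β'_j-1/2} - (-u)^{β'_j-1/2})]^2 du ≤ c |β_j - β'_j|^2 for all t ∈ [ε, Λ]. -/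
open MeasureTheory

namespace Stmt15Aux

open Real Set

lemma rpow_le_add_exp {y e e₁ e₂ : ℝ} (hy : 0 < y) (h1 : e₁ ≤ e) (h2 : e ≤ e₂) :
    y ^ e ≤ y ^ e₁ + y ^ e₂ := by
  rcases le_total 1 y with h | h
  · have h3 := Real.rpow_le_rpow_of_exponent_le h h2
    have h4 := Real.rpow_nonneg hy.le e₁
    linarith
  · have h3 := Real.rpow_le_rpow_of_exponent_ge hy h h1
    have h4 := Real.rpow_nonneg hy.le e₂
    linarith

lemma rpow_le_add_base {A y B : ℝ} (hA : 0 < A) (hAy : A ≤ y) (hyB : y ≤ B) (e : ℝ) :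
    y ^ e ≤ A ^ e + B ^ e := by
  rcases le_total 0 e with h | h
  · have h3 := Real.rpow_le_rpow (by linarith : (0:ℝ) ≤ y) hyB h
    have h4 := Real.rpow_nonneg hA.le e
    linarith
  · have h3 := Real.antitoneOn_rpow_Ioi_of_exponent_nonpos h (Set.mem_Ioi.2 hA)
      (Set.mem_Ioi.2 (hA.trans_le hAy)) hAy
    have h4 := Real.rpow_nonneg (by linarith : (0:ℝ) ≤ B) e
    linarith

lemma hasDerivAt_exp_rpow {a : ℝ} (ha : 0 < a) (b : ℝ) :
    HasDerivAt (fun b : ℝ => a ^ (b - 1/2)) (a ^ (b - 1/2) * Real.log a) b := by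
  have h1 := (Real.hasStrictDerivAt_const_rpow ha (b - 1/2)).hasDerivAt
  have h2 : HasDerivAt (fun b : ℝ => b - 1/2) 1 b := (hasDerivAt_id b).sub_const _
  simpa [Function.comp_def] using h1.comp b h2

lemma abs_log_le_of_mem {a y b : ℝ} (ha : 0 < a) (hay : a ≤ y) (hyb : y ≤ b) :
    |Real.log y| ≤ |Real.log a| + |Real.log b| := by
  have h1 : Real.log a ≤ Real.log y := Real.log_le_log ha hay
  have h2 : Real.log y ≤ Real.log b := Real.log_le_log (ha.trans_le hay) hyb
  have h3 := neg_abs_le (Real.log a)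
  have h4 := le_abs_self (Real.log b)
  have h5 := abs_nonneg (Real.log a)
  have h6 := abs_nonneg (Real.log b)
  rw [abs_le]; constructor <;> linarith

/-- |log x| ≤ x^(-δ)/δ for 0 < x ≤ 1. -/
lemma abs_log_le_rpow_neg {x δ : ℝ} (hx : 0 < x) (hx1 : x ≤ 1) (hδ : 0 < δ) :
    |Real.log x| ≤ x ^ (-δ) / δ := by
  have h0 : Real.log x ≤ 0 := Real.log_nonpos hx.le hx1
  have h1 : |Real.log x| = Real.log x⁻¹ := by
    rw [Real.log_inv, abs_of_nonpos h0]
  have h2 : Real.log x⁻¹ ≤ (x⁻¹) ^ δ / δ :=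
    Real.log_le_rpow_div (inv_nonneg.2 hx.le) hδ
  have h3 : (x⁻¹) ^ δ = x ^ (-δ) := by
    rw [Real.inv_rpow hx.le, ← Real.rpow_neg hx.le]
  rw [h1, ← h3]; exact h2

/-- The key pointwise derivative bound and mean-value estimate. -/
lemma key_bound (α γ ε Λ δ : ℝ) (hα : 0 < α) (hαγ : α ≤ γ) (hγ : γ < 1)
    (hε : 0 < ε) (hεΛ : ε < Λ) (hδ : 0 < δ) (hδα : 2*δ ≤ α) (hδγ : 2*δ ≤ 1 - γ)
    (β β' : ℝ) (h1 : α ≤ β') (h2 : β' ≤ β) (h3 : β ≤ γ)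
    (t : ℝ) (ht1 : ε ≤ t) (ht2 : t ≤ Λ) (x : ℝ) (hx : 0 < x) :
    |((t + x) ^ (β - 1/2) - x ^ (β - 1/2)) -
      ((t + x) ^ (β' - 1/2) - x ^ (β' - 1/2))| ≤
    (β - β') * (if x ≤ 1 then
        (ε ^ (α-1/2) + ε ^ (γ-1/2) + (Λ+1) ^ (α-1/2) + (Λ+1) ^ (γ-1/2)) *
          (|Real.log ε| + |Real.log (Λ+1)| + 1) + (1/δ) * x ^ (α-1/2-δ)
      else (Λ * (1 + 1/δ)) * x ^ (γ-3/2+δ)) := by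
  have htx : 0 < t + x := by linarith
  set C : ℝ := (if x ≤ 1 then
        (ε ^ (α-1/2) + ε ^ (γ-1/2) + (Λ+1) ^ (α-1/2) + (Λ+1) ^ (γ-1/2)) *
          (|Real.log ε| + |Real.log (Λ+1)| + 1) + (1/δ) * x ^ (α-1/2-δ)
      else (Λ * (1 + 1/δ)) * x ^ (γ-3/2+δ)) with hC
  -- derivative bound on [β', β]
  have hbound : ∀ b ∈ Set.Icc β' β,
      |(t + x) ^ (b - 1/2) * Real.log (t + x) - x ^ (b - 1/2) * Real.log x| ≤ C := by
    intro b hb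
    have hbα : α ≤ b := h1.trans hb.1
    have hbγ : b ≤ γ := hb.2.trans h3
    by_cases hcase : x ≤ 1
    · rw [hC, if_pos hcase]
      have hterm1 : |(t + x) ^ (b - 1/2) * Real.log (t + x)| ≤
          (ε ^ (α-1/2) + ε ^ (γ-1/2) + (Λ+1) ^ (α-1/2) + (Λ+1) ^ (γ-1/2)) *
            (|Real.log ε| + |Real.log (Λ+1)| + 1) := by
        rw [abs_mul, abs_of_nonneg (Real.rpow_nonneg htx.le _)]
        have hA : (t + x) ^ (b - 1/2) ≤
            ε ^ (α-1/2) + ε ^ (γ-1/2) + (Λ+1) ^ (α-1/2) + (Λ+1) ^ (γ-1/2) := by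
          have g1 : (t + x) ^ (b - 1/2) ≤ (t + x) ^ (α-1/2) + (t + x) ^ (γ-1/2) :=
            rpow_le_add_exp htx (by linarith) (by linarith)
          have g2 := rpow_le_add_base hε (by linarith : ε ≤ t + x)
            (by linarith : t + x ≤ Λ + 1) (α-1/2)
          have g3 := rpow_le_add_base hε (by linarith : ε ≤ t + x)
            (by linarith : t + x ≤ Λ + 1) (γ-1/2)
          linarith
        have hB : |Real.log (t + x)| ≤ |Real.log ε| + |Real.log (Λ+1)| + 1 := by
          have := abs_log_le_of_mem hε (by linarith : ε ≤ t + x) (by linarith : t + x ≤ Λ + 1)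
          linarith
        have hK1nn : (0:ℝ) ≤ ε ^ (α-1/2) + ε ^ (γ-1/2) + (Λ+1) ^ (α-1/2) + (Λ+1) ^ (γ-1/2) :=
          add_nonneg (add_nonneg (add_nonneg (Real.rpow_nonneg hε.le _)
            (Real.rpow_nonneg hε.le _)) (Real.rpow_nonneg (by linarith) _))
            (Real.rpow_nonneg (by linarith) _)
        exact mul_le_mul hA hB (abs_nonneg _) hK1nn
      have hterm2 : |x ^ (b - 1/2) * Real.log x| ≤ (1/δ) * x ^ (α-1/2-δ) := by
        rw [abs_mul, abs_of_nonneg (Real.rpow_nonneg hx.le _)]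
        have g1 : x ^ (b - 1/2) ≤ x ^ (α - 1/2) :=
          Real.rpow_le_rpow_of_exponent_ge hx hcase (by linarith)
        have g2 : |Real.log x| ≤ x ^ (-δ) / δ := abs_log_le_rpow_neg hx hcase hδ
        have g3 : x ^ (b - 1/2) * |Real.log x| ≤ x ^ (α - 1/2) * (x ^ (-δ) / δ) :=
          mul_le_mul g1 g2 (abs_nonneg _) (Real.rpow_nonneg hx.le _)
        have g4 : x ^ (α - 1/2) * (x ^ (-δ) / δ) = (1/δ) * x ^ (α-1/2-δ) := by
          rw [show α - 1/2 - δ = (α - 1/2) + (-δ) by ring, Real.rpow_add hx]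
          ring
        linarith [g3, g4.symm.le]
      calc |(t + x) ^ (b - 1/2) * Real.log (t + x) - x ^ (b - 1/2) * Real.log x|
          ≤ |(t + x) ^ (b - 1/2) * Real.log (t + x)| + |x ^ (b - 1/2) * Real.log x| :=
            abs_sub _ _
        _ ≤ _ := add_le_add hterm1 hterm2
    · rw [hC, if_neg hcase]
      push_neg at hcase
      -- second mean value theorem in the base variable
      have hψ : ∀ y ∈ Set.Icc x (t + x),
          HasDerivWithinAt (fun y : ℝ => y ^ (b - 1/2) * Real.log y)
            ((b - 1/2) * y ^ (b - 1/2 - 1) * Real.log y + y ^ (b - 1/2) * y⁻¹)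
            (Set.Icc x (t + x)) y := by
        intro y hy
        have hy0 : 0 < y := lt_of_lt_of_le hx hy.1
        exact ((Real.hasDerivAt_rpow_const (Or.inl hy0.ne')).mul
          (Real.hasDerivAt_log hy0.ne')).hasDerivWithinAt
      have hψbound : ∀ y ∈ Set.Icc x (t + x),
          ‖(b - 1/2) * y ^ (b - 1/2 - 1) * Real.log y + y ^ (b - 1/2) * y⁻¹‖ ≤
            (1 + 1/δ) * x ^ (γ-3/2+δ) := by
        intro y hy
        have hy1 : (1:ℝ) < y := lt_of_lt_of_le hcase hy.1
        have hy0 : (0:ℝ) < y := by linarith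
        have hlog : 0 ≤ Real.log y := Real.log_nonneg hy1.le
        have e1 : y ^ (b - 1/2) * y⁻¹ = y ^ (b - 3/2) := by
          rw [show y⁻¹ = y ^ (-1 : ℝ) by rw [Real.rpow_neg_one],
            ← Real.rpow_add hy0, show b - 1/2 + -1 = b - 3/2 by ring]
        have e2 : y ^ (b - 1/2 - 1) = y ^ (b - 3/2) := by
          rw [show b - 1/2 - 1 = b - 3/2 by ring]
        rw [e1, e2, Real.norm_eq_abs]
        have habs : |(b - 1/2) * y ^ (b - 3/2) * Real.log y + y ^ (b - 3/2)| ≤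
            y ^ (b - 3/2) * (Real.log y + 1) := by
          have hb12 : |b - 1/2| ≤ 1 := by rw [abs_le]; constructor <;> linarith
          have hpow : (0:ℝ) ≤ y ^ (b - 3/2) := Real.rpow_nonneg hy0.le _
          have : |(b - 1/2) * y ^ (b - 3/2) * Real.log y| ≤ y ^ (b - 3/2) * Real.log y := by
            rw [abs_mul, abs_mul, abs_of_nonneg hpow, abs_of_nonneg hlog, mul_assoc]
            simpa using mul_le_mul_of_nonneg_right hb12 (mul_nonneg hpow hlog)
          calc |(b - 1/2) * y ^ (b - 3/2) * Real.log y + y ^ (b - 3/2)|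
              ≤ |(b - 1/2) * y ^ (b - 3/2) * Real.log y| + |y ^ (b - 3/2)| := abs_add_le _ _
            _ ≤ y ^ (b - 3/2) * Real.log y + y ^ (b - 3/2) := by
                rw [abs_of_nonneg hpow]; linarith
            _ = y ^ (b - 3/2) * (Real.log y + 1) := by ring
        have hmono : y ^ (b - 3/2) ≤ y ^ (γ - 3/2) :=
          Real.rpow_le_rpow_of_exponent_le hy1.le (by linarith)
        have hlogy : Real.log y + 1 ≤ (1 + 1/δ) * y ^ δ := by
          have g1 : Real.log y ≤ y ^ δ / δ := Real.log_le_rpow_div hy0.le hδ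
          have g2 : (1:ℝ) ≤ y ^ δ := Real.one_le_rpow hy1.le hδ.le
          have g3 : y ^ δ / δ = (1/δ) * y ^ δ := by ring
          have g4 : (1 + 1/δ) * y ^ δ = y ^ δ + (1/δ) * y ^ δ := by ring
          linarith
        have hprod : y ^ (γ - 3/2) * ((1 + 1/δ) * y ^ δ) =
            (1 + 1/δ) * y ^ (γ - 3/2 + δ) := by
          rw [Real.rpow_add hy0]; ring
        have hanti : y ^ (γ - 3/2 + δ) ≤ x ^ (γ - 3/2 + δ) :=
          Real.antitoneOn_rpow_Ioi_of_exponent_nonpos (by linarith)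
            (Set.mem_Ioi.2 hx) (Set.mem_Ioi.2 hy0) hy.1
        have hpos1 : (0:ℝ) ≤ y ^ (γ - 3/2) := Real.rpow_nonneg hy0.le _
        have hpos2 : (0:ℝ) ≤ y ^ (b - 3/2) := Real.rpow_nonneg hy0.le _
        have h1δ : (0:ℝ) < 1 + 1/δ := by positivity
        calc |(b - 1/2) * y ^ (b - 3/2) * Real.log y + y ^ (b - 3/2)|
            ≤ y ^ (b - 3/2) * (Real.log y + 1) := habs
          _ ≤ y ^ (γ - 3/2) * (Real.log y + 1) := by
              exact mul_le_mul_of_nonneg_right hmono (by linarith)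
          _ ≤ y ^ (γ - 3/2) * ((1 + 1/δ) * y ^ δ) := by
              exact mul_le_mul_of_nonneg_left hlogy hpos1
          _ = (1 + 1/δ) * y ^ (γ - 3/2 + δ) := hprod
          _ ≤ (1 + 1/δ) * x ^ (γ - 3/2 + δ) := by
              exact mul_le_mul_of_nonneg_left hanti h1δ.le
      have hmvt := (convex_Icc x (t + x)).norm_image_sub_le_of_norm_hasDerivWithin_le
        hψ hψbound (Set.left_mem_Icc.2 (by linarith)) (Set.right_mem_Icc.2 (by linarith))
      rw [Real.norm_eq_abs, Real.norm_eq_abs] at hmvt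
      have hxpb : (0:ℝ) ≤ x ^ (γ-3/2+δ) := Real.rpow_nonneg hx.le _
      have : |t + x - x| = t := by rw [show t + x - x = t by ring, abs_of_pos (by linarith)]
      rw [this] at hmvt
      calc |(t + x) ^ (b - 1/2) * Real.log (t + x) - x ^ (b - 1/2) * Real.log x|
          ≤ (1 + 1/δ) * x ^ (γ-3/2+δ) * t := hmvt
        _ ≤ (1 + 1/δ) * x ^ (γ-3/2+δ) * Λ := by
            have h1δ : (0:ℝ) ≤ 1 + 1/δ := by positivity
            exact mul_le_mul_of_nonneg_left ht2 (mul_nonneg h1δ hxpb)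
        _ = Λ * (1 + 1/δ) * x ^ (γ-3/2+δ) := by ring
  -- first mean value theorem in the exponent variable
  have hder : ∀ b ∈ Set.Icc β' β,
      HasDerivWithinAt (fun b : ℝ => (t + x) ^ (b - 1/2) - x ^ (b - 1/2))
        ((t + x) ^ (b - 1/2) * Real.log (t + x) - x ^ (b - 1/2) * Real.log x)
        (Set.Icc β' β) b := by
    intro b _
    exact ((hasDerivAt_exp_rpow htx b).sub (hasDerivAt_exp_rpow hx b)).hasDerivWithinAt
  have hbound' : ∀ b ∈ Set.Icc β' β,
      ‖(t + x) ^ (b - 1/2) * Real.log (t + x) - x ^ (b - 1/2) * Real.log x‖ ≤ C := by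
    intro b hb; rw [Real.norm_eq_abs]; exact hbound b hb
  have hmvt := (convex_Icc β' β).norm_image_sub_le_of_norm_hasDerivWithin_le
    hder hbound' (Set.left_mem_Icc.2 h2) (Set.right_mem_Icc.2 h2)
  rw [Real.norm_eq_abs, Real.norm_eq_abs, abs_of_nonneg (by linarith : (0:ℝ) ≤ β - β')]
    at hmvt
  linarith [hmvt]

end Stmt15Aux

open Stmt15Aux Set in
theorem stmt_15 (α γ ε Λ : ℝ) (hα : 0 < α) (hαγ : α ≤ γ) (hγ : γ < 1)
    (hε : 0 < ε) (hεΛ : ε < Λ) :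
    ∃ c : ℝ, 0 < c ∧ ∀ β β' : ℝ, α ≤ β' → β' ≤ β → β ≤ γ →
      ∀ t ∈ Set.Icc ε Λ,
        (∫ u in Set.Iio (0:ℝ),
            (((t - u) ^ (β - 1 / 2) - (-u) ^ (β - 1 / 2)) -
              ((t - u) ^ (β' - 1 / 2) - (-u) ^ (β' - 1 / 2))) ^ 2) ≤
          c * |β - β'| ^ 2 := by
  set δ : ℝ := min α (1 - γ) / 2 with hδdef
  have hδ : 0 < δ := by
    have : 0 < min α (1 - γ) := lt_min hα (by linarith)
    positivity
  have hδα : 2 * δ ≤ α := by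
    have := min_le_left α (1 - γ); rw [hδdef]; linarith
  have hδγ : 2 * δ ≤ 1 - γ := by
    have := min_le_right α (1 - γ); rw [hδdef]; linarith
  set C₁ : ℝ := (ε ^ (α-1/2) + ε ^ (γ-1/2) + (Λ+1) ^ (α-1/2) + (Λ+1) ^ (γ-1/2)) *
      (|Real.log ε| + |Real.log (Λ+1)| + 1) with hC₁
  set C₂ : ℝ := 1/δ with hC₂
  set C₃ : ℝ := Λ * (1 + 1/δ) with hC₃
  set pa : ℝ := α - 1/2 - δ with hpa
  set pb : ℝ := γ - 3/2 + δ with hpb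
  set G : ℝ → ℝ := fun x => if x ≤ 1 then C₁ + C₂ * x ^ pa else C₃ * x ^ pb with hG
  have hΛ : 0 < Λ := hε.trans hεΛ
  -- integrability of G² on (0,∞)
  have h2pa : (-1:ℝ) < pa + pa := by rw [hpa]; linarith
  have hpa1 : (-1:ℝ) < pa := by rw [hpa]; linarith
  have h2pb : pb + pb < -1 := by rw [hpb]; linarith
  have hGsq : IntegrableOn (fun x => (G x)^2) (Set.Ioi (0:ℝ)) := by
    have hioc : IntegrableOn (fun x => (G x)^2) (Set.Ioc (0:ℝ) 1) := by
      rw [integrableOn_Ioc_iff_integrableOn_Ioo]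
      have base : IntegrableOn
          (fun x : ℝ => (C₁^2 + (2*C₁*C₂) * x ^ pa) + C₂^2 * x ^ (pa+pa))
          (Set.Ioo (0:ℝ) 1) := by
        apply Integrable.add
        · apply Integrable.add
          · exact integrableOn_const measure_Ioo_lt_top.ne
          · exact ((intervalIntegral.integrableOn_Ioo_rpow_iff one_pos).2 hpa1).const_mul _
        · exact ((intervalIntegral.integrableOn_Ioo_rpow_iff one_pos).2 h2pa).const_mul _
      refine base.congr_fun (fun x hx => ?_) measurableSet_Ioo
      have hx0 : (0:ℝ) < x := hx.1
      rw [hG]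
      simp only [if_pos hx.2.le]
      rw [Real.rpow_add hx0]
      ring
    have hioi : IntegrableOn (fun x => (G x)^2) (Set.Ioi (1:ℝ)) := by
      have base : IntegrableOn (fun x : ℝ => C₃^2 * x ^ (pb+pb)) (Set.Ioi (1:ℝ)) :=
        ((integrableOn_Ioi_rpow_iff one_pos).2 h2pb).const_mul _
      refine base.congr_fun (fun x hx => ?_) measurableSet_Ioi
      have hx1 : (1:ℝ) < x := hx
      rw [hG]
      simp only [if_neg (not_le.2 hx1)]
      rw [Real.rpow_add (by linarith : (0:ℝ) < x)]
      ring
    have : Set.Ioc (0:ℝ) 1 ∪ Set.Ioi 1 = Set.Ioi 0 := Set.Ioc_union_Ioi_eq_Ioi zero_le_one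
    rw [← this]
    exact (integrableOn_union).2 ⟨hioc, hioi⟩
  have hint : IntegrableOn (fun u => (G (-u))^2) (Set.Iio (0:ℝ)) := by
    rw [← (Measure.measurePreserving_neg (volume : Measure ℝ)).integrableOn_comp_preimage
        (Homeomorph.neg ℝ).measurableEmbedding] at hGsq
    simpa [Function.comp_def] using hGsq
  refine ⟨(∫ u in Set.Iio (0:ℝ), (G (-u))^2) + 1, ?_, ?_⟩
  · have : 0 ≤ ∫ u in Set.Iio (0:ℝ), (G (-u))^2 :=
      integral_nonneg fun u => sq_nonneg _
    linarith
  · intro β β' h1 h2 h3 t ht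
    obtain ⟨ht1, ht2⟩ := ht
    have hstep : (∫ u in Set.Iio (0:ℝ),
        (((t - u) ^ (β - 1 / 2) - (-u) ^ (β - 1 / 2)) -
          ((t - u) ^ (β' - 1 / 2) - (-u) ^ (β' - 1 / 2))) ^ 2) ≤
        ∫ u in Set.Iio (0:ℝ), |β - β'|^2 * (G (-u))^2 := by
      apply integral_mono_of_nonneg
      · exact Filter.Eventually.of_forall fun u => sq_nonneg _
      · exact hint.const_mul _
      · filter_upwards [ae_restrict_mem measurableSet_Iio] with u hu
        have hu' : u < 0 := hu
        have hx : 0 < -u := neg_pos.2 hu'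
        have key := key_bound α γ ε Λ δ hα hαγ hγ hε hεΛ hδ hδα hδγ
          β β' h1 h2 h3 t ht1 ht2 (-u) hx
        have htu : t - u = t + (-u) := by ring
        rw [← htu] at key
        have hGx : G (-u) = (if -u ≤ 1 then C₁ + C₂ * (-u) ^ pa else C₃ * (-u) ^ pb) := rfl
        have key2 : |((t - u) ^ (β - 1/2) - (-u) ^ (β - 1/2)) -
            ((t - u) ^ (β' - 1/2) - (-u) ^ (β' - 1/2))| ≤ (β - β') * G (-u) := by
          rw [hGx, hC₁, hC₂, hC₃, hpa, hpb]
          exact key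
        have habs : (((t - u) ^ (β - 1 / 2) - (-u) ^ (β - 1 / 2)) -
            ((t - u) ^ (β' - 1 / 2) - (-u) ^ (β' - 1 / 2))) ^ 2 ≤
            ((β - β') * G (-u)) ^ 2 := by
          rw [← sq_abs]
          have hnn : (0:ℝ) ≤ (β - β') * G (-u) := (abs_nonneg _).trans key2
          exact pow_le_pow_left₀ (abs_nonneg _) key2 2
        calc (((t - u) ^ (β - 1 / 2) - (-u) ^ (β - 1 / 2)) -
            ((t - u) ^ (β' - 1 / 2) - (-u) ^ (β' - 1 / 2))) ^ 2
            ≤ ((β - β') * G (-u)) ^ 2 := habs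
          _ = |β - β'|^2 * (G (-u))^2 := by
              rw [mul_pow, ← sq_abs (β - β')]
    rw [integral_const_mul] at hstep
    have hI : 0 ≤ ∫ u in Set.Iio (0:ℝ), (G (-u))^2 :=
      integral_nonneg fun u => sq_nonneg _
    have hb2 : 0 ≤ |β - β'|^2 := sq_nonneg _
    nlinarith [hstep]
end
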